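/- Lipschitz stability of two-fold transport combinations for bi-Lipschitz transports (key estimate in the proof of Theorem 4): for every K≥1 and c>0 there exists a constant C = C(K,c,s₁,s₂) such that for all α₁,α₂ ∈ [−c,c] and all T₁,T₂,T₁′,T₂′ ∈ 𝒯 that are strictly increasing, differentiable and bi-Lipschitz with constant K, one has d₁(α₂⊙T₂ ⊕ α₁⊙T₁, α₂⊙T₂′ ⊕ α₁⊙T₁′) ≤ C·(d₁(T₁,T₁′) + d₁(T₂,T₂′)). -/

import Mathlib

open MeasureTheory ProbabilityTheory Filter Topology

noncomputable section

namespace ATM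

/-- The space 𝒯 of transport maps on [s₁, s₂]: non-decreasing self-maps of
[s₁, s₂] fixing the endpoints. -/
def IsTransport (s₁ s₂ : ℝ) (T : ℝ → ℝ) : Prop :=
  MonotoneOn T (Set.Icc s₁ s₂) ∧ Set.MapsTo T (Set.Icc s₁ s₂) (Set.Icc s₁ s₂) ∧
    T s₁ = s₁ ∧ T s₂ = s₂

/-- Generalized (left-continuous) inverse T⁻¹(x) = inf{y ∈ [s₁,s₂] : T(y) ≥ x}. -/
def geninv (s₁ s₂ : ℝ) (T : ℝ → ℝ) : ℝ → ℝ :=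
  fun x => sInf {y | y ∈ Set.Icc s₁ s₂ ∧ x ≤ T y}

/-- L¹ distance d₁(S,T) = ∫_𝒮 |S-T| dλ. -/
def d1 (s₁ s₂ : ℝ) (S T : ℝ → ℝ) : ℝ := ∫ x in s₁..s₂, |S x - T x|

/-- L^q distance d_q(S,T) = (∫_𝒮 |S-T|^q dλ)^{1/q}. -/
def dq (s₁ s₂ q : ℝ) (S T : ℝ → ℝ) : ℝ := (∫ x in s₁..s₂, |S x - T x| ^ q) ^ (1 / q)

/-- Sup distance d_∞(S,T) = sup_{x ∈ 𝒮} |S(x) - T(x)|. -/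
def dinf (s₁ s₂ : ℝ) (S T : ℝ → ℝ) : ℝ := ⨆ x : Set.Icc s₁ s₂, |S x.1 - T x.1|

/-- Addition on 𝒯: T₁ ⊕ T₂ = T₂ ∘ T₁. -/
def oplus (T₁ T₂ : ℝ → ℝ) : ℝ → ℝ := T₂ ∘ T₁

/-- Scalar multiplication α ⊙ T for -1 ≤ α ≤ 1. -/
def oneSmul (s₁ s₂ α : ℝ) (T : ℝ → ℝ) : ℝ → ℝ := fun x =>
  if 0 < α then x + α * (T x - x)
  else if α = 0 then x
  else x + α * (x - geninv s₁ s₂ T x)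

/-- Scalar multiplication α ⊙ T for general α, via b = ⌊|α|⌋, a = |α| - b. -/
def odot (s₁ s₂ α : ℝ) (T : ℝ → ℝ) : ℝ → ℝ :=
  if |α| ≤ 1 then oneSmul s₁ s₂ α T
  else if 0 < α then (oneSmul s₁ s₂ (Int.fract α) T) ∘ T^[(⌊α⌋).toNat]
  else (oneSmul s₁ s₂ (Int.fract |α|) (geninv s₁ s₂ T)) ∘ (geninv s₁ s₂ T)^[(⌊|α|⌋).toNat]

variable {Ω : Type*}

/-- φ_e(S) = α ⊙ S ⊕ e = e ∘ (α ⊙ S). -/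
def phi (s₁ s₂ α : ℝ) (e S : ℝ → ℝ) : ℝ → ℝ := e ∘ odot s₁ s₂ α S

/-- Iterated random maps φ̃_{i,m}(S) = φ_{ε_i} ∘ ⋯ ∘ φ_{ε_{i-m+1}}(S). -/
def phiIter (s₁ s₂ α : ℝ) (ε : ℤ → Ω → ℝ → ℝ) : ℕ → ℤ → (ℝ → ℝ) → Ω → ℝ → ℝ
  | 0, _, S, _ => S
  | m + 1, i, S, ω => phi s₁ s₂ α (ε i ω) (phiIter s₁ s₂ α ε m (i - 1) S ω)

/-- Concurrent scalar multiplication β ⊛ T for β : 𝒮 → [-1,1]. -/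
def bsmul (s₁ s₂ : ℝ) (β T : ℝ → ℝ) : ℝ → ℝ := fun x =>
  if 0 < β x then x + β x * (T x - x)
  else if β x = 0 then x
  else x + β x * (x - geninv s₁ s₂ T x)

/-- φ_e(S) = β ⊛ S ⊕ e for the concurrent model. -/
def cphi (s₁ s₂ : ℝ) (β e S : ℝ → ℝ) : ℝ → ℝ := e ∘ bsmul s₁ s₂ β S

/-- Iterated random maps for the concurrent model. -/
def cphiIter (s₁ s₂ : ℝ) (β : ℝ → ℝ) (ε : ℤ → Ω → ℝ → ℝ) : ℕ → ℤ → (ℝ → ℝ) → Ω → ℝ → ℝ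
  | 0, _, S, _ => S
  | m + 1, i, S, ω => cphi s₁ s₂ β (ε i ω) (cphiIter s₁ s₂ β ε m (i - 1) S ω)

/-- The chain α_p ⊙ S₁ ⊕ α_{p-1} ⊙ S₂ ⊕ ⋯ ⊕ α₁ ⊙ S_p, where `a k` denotes α_{k+1}
and `S k` denotes S_{k+1} (0-based). Since A ⊕ B = B ∘ A, the map α_p ⊙ S₁ acts first. -/
def atmChain (s₁ s₂ : ℝ) {p : ℕ} (a : Fin p → ℝ) (S : Fin p → ℝ → ℝ) : ℝ → ℝ :=
  fun x => Fin.foldl p (fun y k => odot s₁ s₂ (a k.rev) (S k) y) x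

/-- Υ_e(𝐒) = (S₂, …, S_p, α_p ⊙ S₁ ⊕ ⋯ ⊕ α₁ ⊙ S_p ⊕ e). -/
def upsilon (s₁ s₂ : ℝ) {p : ℕ} (a : Fin p → ℝ) (e : ℝ → ℝ) (S : Fin p → ℝ → ℝ) :
    Fin p → ℝ → ℝ :=
  fun j => if h : (j : ℕ) + 1 < p then S ⟨(j : ℕ) + 1, h⟩ else e ∘ atmChain s₁ s₂ a S

/-- Iterated random maps Υ̃_{i,m}(𝐒) = Υ_{ε_i} ∘ ⋯ ∘ Υ_{ε_{i-m+1}}(𝐒). -/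
def upsilonIter (s₁ s₂ : ℝ) {p : ℕ} (a : Fin p → ℝ) (ε : ℤ → Ω → ℝ → ℝ) :
    ℕ → ℤ → (Fin p → ℝ → ℝ) → Ω → Fin p → ℝ → ℝ
  | 0, _, S, _ => S
  | m + 1, i, S, ω => upsilon s₁ s₂ a (ε i ω) (upsilonIter s₁ s₂ a ε m (i - 1) S ω)

/-- Product L^q metric on 𝒯^p. -/
def dqProd (s₁ s₂ q : ℝ) {p : ℕ} (S R : Fin p → ℝ → ℝ) : ℝ :=
  Real.sqrt (∑ k, (dq s₁ s₂ q (S k) (R k)) ^ 2)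

/-- Product L¹ metric on 𝒯^p. -/
def d1Prod (s₁ s₂ : ℝ) {p : ℕ} (S R : Fin p → ℝ → ℝ) : ℝ :=
  Real.sqrt (∑ k, (d1 s₁ s₂ (S k) (R k)) ^ 2)

/-- Joint measurability of a random function. -/
def JM [MeasurableSpace Ω] (f : Ω → ℝ → ℝ) : Prop :=
  Measurable fun q : Ω × ℝ => f q.1 q.2

/-- (ε_i)_{i ∈ ℤ} are i.i.d. random elements. -/
def IID [MeasurableSpace Ω] (P : Measure Ω) (ε : ℤ → Ω → ℝ → ℝ) : Prop :=
  iIndepFun ε P ∧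
    ∀ i j : ℤ, Measure.map (ε i) P = Measure.map (ε j) P

/-- Stationarity of a ℤ-indexed function-valued process: shift invariance of the joint law. -/
def Stationary [MeasurableSpace Ω] (P : Measure Ω) (X : ℤ → Ω → ℝ → ℝ) : Prop :=
  Measure.map (fun ω => fun i : ℤ => X (i + 1) ω) P =
    Measure.map (fun ω => fun i : ℤ => X i ω) P

/-- Completeness of a class of maps under the sup metric d_∞ on [s₁,s₂]. -/
def CompleteUnder (s₁ s₂ : ℝ) (TT : Set (ℝ → ℝ)) : Prop :=
  ∀ f : ℕ → ℝ → ℝ, (∀ n, f n ∈ TT) →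
    (∀ δ : ℝ, 0 < δ → ∃ N, ∀ m ≥ N, ∀ n ≥ N, dinf s₁ s₂ (f m) (f n) < δ) →
    ∃ g ∈ TT, Tendsto (fun n => dinf s₁ s₂ (f n) g) atTop (𝓝 0)

/-- Bi-Lipschitz with constant K on [s₁,s₂]. -/
def BiLipschitzOn (s₁ s₂ K : ℝ) (T : ℝ → ℝ) : Prop :=
  ∀ x ∈ Set.Icc s₁ s₂, ∀ y ∈ Set.Icc s₁ s₂,
    K⁻¹ * |x - y| ≤ |T x - T y| ∧ |T x - T y| ≤ K * |x - y|

/-- Empirical least-squares criterion l₊. -/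
def lplusD (s₁ s₂ : ℝ) (F : ℕ → ℝ → ℝ) (n : ℕ) (a : ℝ) : ℝ :=
  ∑ i ∈ Finset.Icc 2 n, ∫ x in s₁..s₂, (F i x - x - a * (F (i - 1) x - x)) ^ 2

/-- Empirical least-squares criterion l₋. -/
def lminusD (s₁ s₂ : ℝ) (F : ℕ → ℝ → ℝ) (n : ℕ) (a : ℝ) : ℝ :=
  ∑ i ∈ Finset.Icc 2 n, ∫ x in s₁..s₂,
    (F i x - x - a * (x - geninv s₁ s₂ (F (i - 1)) x)) ^ 2

/-- Empirical autocovariance ρ̂¹₊. -/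
def rho1pD (s₁ s₂ : ℝ) (F : ℕ → ℝ → ℝ) (n : ℕ) : ℝ :=
  (1 / ((n : ℝ) - 1)) * ∑ i ∈ Finset.Icc 2 n, ∫ x in s₁..s₂, (F i x - x) * (F (i - 1) x - x)

/-- Empirical autocovariance ρ̂¹₋. -/
def rho1mD (s₁ s₂ : ℝ) (F : ℕ → ℝ → ℝ) (n : ℕ) : ℝ :=
  (1 / ((n : ℝ) - 1)) * ∑ i ∈ Finset.Icc 2 n, ∫ x in s₁..s₂,
    (F i x - x) * (x - geninv s₁ s₂ (F (i - 1)) x)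

/-- Empirical second moment ρ̂⁰₊. -/
def rho0pD (s₁ s₂ : ℝ) (F : ℕ → ℝ → ℝ) (n : ℕ) : ℝ :=
  (1 / ((n : ℝ) - 1)) * ∑ i ∈ Finset.Icc 2 n, ∫ x in s₁..s₂, (F (i - 1) x - x) ^ 2

/-- Empirical second moment ρ̂⁰₋. -/
def rho0mD (s₁ s₂ : ℝ) (F : ℕ → ℝ → ℝ) (n : ℕ) : ℝ :=
  (1 / ((n : ℝ) - 1)) * ∑ i ∈ Finset.Icc 2 n, ∫ x in s₁..s₂,
    (x - geninv s₁ s₂ (F (i - 1)) x) ^ 2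

/-- Pointwise least-squares criterion l₊(·|x). -/
def lplusPt (F : ℕ → ℝ → ℝ) (n : ℕ) (x a : ℝ) : ℝ :=
  ∑ i ∈ Finset.Icc 2 n, (F i x - x - a * (F (i - 1) x - x)) ^ 2

/-- Pointwise least-squares criterion l₋(·|x). -/
def lminusPt (s₁ s₂ : ℝ) (F : ℕ → ℝ → ℝ) (n : ℕ) (x a : ℝ) : ℝ :=
  ∑ i ∈ Finset.Icc 2 n, (F i x - x - a * (x - geninv s₁ s₂ (F (i - 1)) x)) ^ 2

/-- Pointwise empirical autocovariance ρ̂¹₊(x). -/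
def rho1pPt (F : ℕ → ℝ → ℝ) (n : ℕ) (x : ℝ) : ℝ :=
  (1 / ((n : ℝ) - 1)) * ∑ i ∈ Finset.Icc 2 n, (F i x - x) * (F (i - 1) x - x)

/-- Pointwise empirical autocovariance ρ̂¹₋(x). -/
def rho1mPt (s₁ s₂ : ℝ) (F : ℕ → ℝ → ℝ) (n : ℕ) (x : ℝ) : ℝ :=
  (1 / ((n : ℝ) - 1)) * ∑ i ∈ Finset.Icc 2 n, (F i x - x) * (x - geninv s₁ s₂ (F (i - 1)) x)

/-- Pointwise empirical second moment ρ̂⁰₊(x). -/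
def rho0pPt (F : ℕ → ℝ → ℝ) (n : ℕ) (x : ℝ) : ℝ :=
  (1 / ((n : ℝ) - 1)) * ∑ i ∈ Finset.Icc 2 n, (F (i - 1) x - x) ^ 2

/-- Pointwise empirical second moment ρ̂⁰₋(x). -/
def rho0mPt (s₁ s₂ : ℝ) (F : ℕ → ℝ → ℝ) (n : ℕ) (x : ℝ) : ℝ :=
  (1 / ((n : ℝ) - 1)) * ∑ i ∈ Finset.Icc 2 n, (x - geninv s₁ s₂ (F (i - 1)) x) ^ 2


section AuxProof

open scoped ENNReal NNReal

variable {s₁ s₂ K : ℝ} {T U : ℝ → ℝ}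

/-- Clamp of `x` to `[s₁, s₂]`. -/
def clamp (s₁ s₂ x : ℝ) : ℝ := min (max x s₁) s₂

lemma clamp_monotone : Monotone (clamp s₁ s₂) := fun _ _ h =>
  min_le_min (max_le_max h le_rfl) le_rfl

lemma clamp_mem (hs : s₁ ≤ s₂) (x : ℝ) : clamp s₁ s₂ x ∈ Set.Icc s₁ s₂ :=
  ⟨le_min (le_max_right _ _) hs, min_le_right _ _⟩

lemma clamp_eq {x : ℝ} (hx : x ∈ Set.Icc s₁ s₂) : clamp s₁ s₂ x = x := by
  simp only [clamp, max_eq_left hx.1, min_eq_left hx.2]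

/-- A nice transport: strictly monotone, endpoint-fixing, bi-Lipschitz self-map. -/
structure Nice (s₁ s₂ K : ℝ) (T : ℝ → ℝ) : Prop where
  smono : StrictMonoOn T (Set.Icc s₁ s₂)
  maps : Set.MapsTo T (Set.Icc s₁ s₂) (Set.Icc s₁ s₂)
  ep1 : T s₁ = s₁
  ep2 : T s₂ = s₂
  bil : BiLipschitzOn s₁ s₂ K T

lemma Nice.mono (h : Nice s₁ s₂ K T) : MonotoneOn T (Set.Icc s₁ s₂) := h.smono.monotoneOn

lemma Nice.le_bounds (h : Nice s₁ s₂ K T) :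
    ∀ x ∈ Set.Icc s₁ s₂, ∀ y ∈ Set.Icc s₁ s₂, x ≤ y →
      K⁻¹ * (y - x) ≤ T y - T x ∧ T y - T x ≤ K * (y - x) := by
  intro x hx y hy hxy
  obtain ⟨l, u⟩ := h.bil x hx y hy
  have hm : T x ≤ T y := h.mono hx hy hxy
  rw [abs_sub_comm x y, abs_sub_comm (T x) (T y), abs_of_nonneg (by linarith : (0:ℝ) ≤ y - x),
    abs_of_nonneg (by linarith : (0:ℝ) ≤ T y - T x)] at l u
  exact ⟨l, u⟩

lemma nice_of (hK : 0 < K) (h1 : T s₁ = s₁) (h2 : T s₂ = s₂)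
    (hm : Set.MapsTo T (Set.Icc s₁ s₂) (Set.Icc s₁ s₂))
    (hb : ∀ x ∈ Set.Icc s₁ s₂, ∀ y ∈ Set.Icc s₁ s₂, x ≤ y →
      K⁻¹ * (y - x) ≤ T y - T x ∧ T y - T x ≤ K * (y - x)) :
    Nice s₁ s₂ K T := by
  have hK' : 0 < K⁻¹ := inv_pos.2 hK
  have smono : StrictMonoOn T (Set.Icc s₁ s₂) := by
    intro x hx y hy hxy
    have h3 := (hb x hx y hy hxy.le).1
    nlinarith
  refine ⟨smono, hm, h1, h2, ?_⟩
  intro x hx y hy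
  rcases le_total x y with h | h
  · obtain ⟨l, u⟩ := hb x hx y hy h
    have h4 : 0 ≤ T y - T x := le_trans (by nlinarith) l
    rw [abs_sub_comm x y, abs_sub_comm (T x) (T y),
      abs_of_nonneg (by linarith : (0:ℝ) ≤ y - x), abs_of_nonneg h4]
    exact ⟨l, u⟩
  · obtain ⟨l, u⟩ := hb y hy x hx h
    have h4 : 0 ≤ T x - T y := le_trans (by nlinarith) l
    rw [abs_of_nonneg (by linarith : (0:ℝ) ≤ x - y), abs_of_nonneg h4]
    exact ⟨l, u⟩

lemma Nice.weaken {K' : ℝ} (hK : 0 < K) (hKK' : K ≤ K') (h : Nice s₁ s₂ K T) :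
    Nice s₁ s₂ K' T := by
  refine ⟨h.smono, h.maps, h.ep1, h.ep2, ?_⟩
  intro x hx y hy
  obtain ⟨l, u⟩ := h.bil x hx y hy
  constructor
  · exact le_trans (mul_le_mul_of_nonneg_right (inv_anti₀ hK hKK') (abs_nonneg _)) l
  · exact u.trans (mul_le_mul_of_nonneg_right hKK' (abs_nonneg _))

lemma nice_id (hK : 1 ≤ K) : Nice s₁ s₂ K (fun x => x) := by
  apply nice_of (lt_of_lt_of_le one_pos hK) rfl rfl (fun x hx => hx)
  intro x hx y hy hxy
  have h1 : K⁻¹ ≤ 1 := inv_le_one_of_one_le₀ hK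
  constructor <;> nlinarith

lemma Nice.cont (hK : 0 < K) (h : Nice s₁ s₂ K T) : ContinuousOn T (Set.Icc s₁ s₂) := by
  have hl : LipschitzOnWith K.toNNReal T (Set.Icc s₁ s₂) := by
    rw [lipschitzOnWith_iff_dist_le_mul]
    intro x hx y hy
    rw [Real.dist_eq, Real.dist_eq, Real.coe_toNNReal _ hK.le]
    exact (h.bil x hx y hy).2
  exact hl.continuousOn

lemma Nice.surjOn (hs : s₁ ≤ s₂) (hK : 0 < K) (h : Nice s₁ s₂ K T) :
    Set.SurjOn T (Set.Icc s₁ s₂) (Set.Icc s₁ s₂) := by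
  intro x hx
  have h2 := intermediate_value_Icc hs (h.cont hK)
  rw [h.ep1, h.ep2] at h2
  exact h2 hx

lemma Nice.geninv_eq (h : Nice s₁ s₂ K T) {y : ℝ} (hy : y ∈ Set.Icc s₁ s₂) :
    geninv s₁ s₂ T (T y) = y := by
  apply IsLeast.csInf_eq
  constructor
  · exact ⟨hy, le_rfl⟩
  · intro z hz
    by_contra hlt
    push_neg at hlt
    exact absurd hz.2 (not_le.2 (h.smono hz.1 hy hlt))

lemma Nice.geninv_spec (hs : s₁ ≤ s₂) (hK : 0 < K) (h : Nice s₁ s₂ K T) {x : ℝ}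
    (hx : x ∈ Set.Icc s₁ s₂) :
    geninv s₁ s₂ T x ∈ Set.Icc s₁ s₂ ∧ T (geninv s₁ s₂ T x) = x := by
  obtain ⟨y, hy, hTy⟩ := h.surjOn hs hK hx
  have h2 : geninv s₁ s₂ T x = y := by rw [← hTy]; exact h.geninv_eq hy
  rw [h2]
  exact ⟨hy, hTy⟩

lemma Nice.geninv_nice (hs : s₁ ≤ s₂) (hK : 0 < K) (h : Nice s₁ s₂ K T) :
    Nice s₁ s₂ K (geninv s₁ s₂ T) := by
  apply nice_of hK
  · have h2 := h.geninv_eq (Set.left_mem_Icc.2 hs)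
    rw [h.ep1] at h2
    exact h2
  · have h2 := h.geninv_eq (Set.right_mem_Icc.2 hs)
    rw [h.ep2] at h2
    exact h2
  · exact fun x hx => (h.geninv_spec hs hK hx).1
  · intro x hx y hy hxy
    obtain ⟨hu, hTu⟩ := h.geninv_spec hs hK hx
    obtain ⟨hv, hTv⟩ := h.geninv_spec hs hK hy
    set u := geninv s₁ s₂ T x
    set v := geninv s₁ s₂ T y
    have huv : u ≤ v := by
      by_contra hc
      push_neg at hc
      have := h.smono hv hu hc
      rw [hTu, hTv] at this
      linarith
    obtain ⟨l, u2⟩ := h.le_bounds u hu v hv huv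
    rw [hTu, hTv] at l u2
    constructor <;> nlinarith [inv_pos.2 hK, mul_pos hK (inv_pos.2 hK), mul_inv_cancel₀ hK.ne']

lemma Nice.comp {K' : ℝ} {U : ℝ → ℝ} (hK : 0 < K) (hK' : 0 < K')
    (hT : Nice s₁ s₂ K T) (hU : Nice s₁ s₂ K' U) :
    Nice s₁ s₂ (K * K') (fun x => U (T x)) := by
  apply nice_of (by positivity)
  · rw [hT.ep1, hU.ep1]
  · rw [hT.ep2, hU.ep2]
  · exact fun x hx => hU.maps (hT.maps hx)
  · intro x hx y hy hxy
    have h1 := hT.le_bounds x hx y hy hxy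
    have h2 := hU.le_bounds (T x) (hT.maps hx) (T y) (hT.maps hy)
      (hT.mono hx hy hxy)
    have e : (K * K')⁻¹ = K⁻¹ * K'⁻¹ := by rw [mul_inv]
    rw [e]
    have hKi := inv_pos.2 hK
    have hK'i := inv_pos.2 hK'
    constructor <;> nlinarith [h1.1, h1.2, h2.1, h2.2, mul_inv_cancel₀ hK.ne',
      mul_inv_cancel₀ hK'.ne']

lemma Nice.iter (hK : 1 ≤ K) (h : Nice s₁ s₂ K T) :
    ∀ b : ℕ, Nice s₁ s₂ (K ^ b) (T^[b])
  | 0 => by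
    rw [pow_zero]
    have : (T^[0] : ℝ → ℝ) = fun x => x := by funext x; simp
    rw [this]
    exact nice_id le_rfl
  | b + 1 => by
    have hK0 : (0:ℝ) < K := lt_of_lt_of_le one_pos hK
    have hc := (h.iter hK b).comp (pow_pos hK0 b) hK0 h
    have e : (fun x => T (T^[b] x)) = T^[b+1] := by
      funext x
      exact (Function.iterate_succ_apply' T b x).symm
    rw [e] at hc
    rw [pow_succ]
    exact hc

lemma nice_oneSmul (hs : s₁ ≤ s₂) (hK : 1 ≤ K) {a : ℝ} (ha0 : 0 ≤ a) (ha1 : a ≤ 1)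
    (h : Nice s₁ s₂ K T) : Nice s₁ s₂ K (oneSmul s₁ s₂ a T) := by
  have hK0 : (0:ℝ) < K := lt_of_lt_of_le one_pos hK
  rcases eq_or_lt_of_le ha0 with heq | ha
  · have e : oneSmul s₁ s₂ a T = fun x => x := by
      funext x; simp [oneSmul, ← heq]
    rw [e]
    exact nice_id hK
  · have e : oneSmul s₁ s₂ a T = fun x => x + a * (T x - x) := by
      funext x; simp [oneSmul, ha]
    rw [e]
    apply nice_of hK0
    · simp [h.ep1]
    · simp [h.ep2]
    · intro x hx
      have hTx := h.maps hx
      refine ⟨?_, ?_⟩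
      · show s₁ ≤ x + a * (T x - x)
        nlinarith [mul_nonneg ha.le (sub_nonneg.2 hTx.1),
          mul_nonneg (sub_nonneg.2 ha1) (sub_nonneg.2 hx.1)]
      · show x + a * (T x - x) ≤ s₂
        nlinarith [mul_nonneg ha.le (sub_nonneg.2 hTx.2),
          mul_nonneg (sub_nonneg.2 ha1) (sub_nonneg.2 hx.2)]
    · intro x hx y hy hxy
      obtain ⟨l, u⟩ := h.le_bounds x hx y hy hxy
      have hKi : 0 < K⁻¹ := inv_pos.2 hK0
      have hKi1 : K⁻¹ ≤ 1 := inv_le_one_of_one_le₀ hK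
      constructor
      · nlinarith [mul_nonneg (sub_nonneg.2 ha1) (sub_nonneg.2 hxy)]
      · nlinarith [mul_nonneg (sub_nonneg.2 ha1) (sub_nonneg.2 hxy)]

lemma intInt_of_meas_bdd {r : ℝ → ℝ} {B : ℝ} (hr : Measurable r) (hB : ∀ x, |r x| ≤ B) :
    IntervalIntegrable r volume s₁ s₂ := by
  have hc : IntervalIntegrable (fun _ : ℝ => B) volume s₁ s₂ := intervalIntegrable_const
  apply hc.mono_fun hr.aestronglyMeasurable
  refine Filter.Eventually.of_forall fun x => ?_
  simp only [Real.norm_eq_abs]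
  exact (hB x).trans (le_abs_self B)

lemma intAbs (hs : s₁ ≤ s₂) {f g : ℝ → ℝ}
    (hf : MonotoneOn f (Set.Icc s₁ s₂)) (hfm : Set.MapsTo f (Set.Icc s₁ s₂) (Set.Icc s₁ s₂))
    (hg : MonotoneOn g (Set.Icc s₁ s₂)) (hgm : Set.MapsTo g (Set.Icc s₁ s₂) (Set.Icc s₁ s₂)) :
    IntervalIntegrable (fun x => |f x - g x|) volume s₁ s₂ := by
  set F := fun x => f (clamp s₁ s₂ x) with hF
  set G := fun x => g (clamp s₁ s₂ x) with hG
  have hFmono : Monotone F := fun x y h => hf (clamp_mem hs x) (clamp_mem hs y) (clamp_monotone h)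
  have hGmono : Monotone G := fun x y h => hg (clamp_mem hs x) (clamp_mem hs y) (clamp_monotone h)
  have h1 : IntervalIntegrable (fun x => |F x - G x|) volume s₁ s₂ := by
    apply intInt_of_meas_bdd (B := s₂ - s₁) ((hFmono.measurable.sub hGmono.measurable).abs)
    intro x
    have hFx := hfm (clamp_mem hs x)
    have hGx := hgm (clamp_mem hs x)
    rw [abs_abs]
    rw [abs_le]
    simp only [Pi.sub_apply]
    constructor <;> [linarith [hFx.1, hGx.2]; linarith [hFx.2, hGx.1]]
  rw [intervalIntegrable_iff] at h1 ⊢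
  apply h1.congr_fun _ measurableSet_uIoc
  intro x hx
  rw [Set.uIoc_of_le hs] at hx
  have hxI : x ∈ Set.Icc s₁ s₂ := ⟨hx.1.le, hx.2⟩
  simp only [hF, hG, clamp_eq hxI]

lemma d1_nonneg (hs : s₁ ≤ s₂) (f g : ℝ → ℝ) : 0 ≤ d1 s₁ s₂ f g :=
  intervalIntegral.integral_nonneg hs fun x _ => abs_nonneg _

lemma d1_triangle (hs : s₁ ≤ s₂) {f g h : ℝ → ℝ}
    (hf : MonotoneOn f (Set.Icc s₁ s₂)) (hfm : Set.MapsTo f (Set.Icc s₁ s₂) (Set.Icc s₁ s₂))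
    (hg : MonotoneOn g (Set.Icc s₁ s₂)) (hgm : Set.MapsTo g (Set.Icc s₁ s₂) (Set.Icc s₁ s₂))
    (hh : MonotoneOn h (Set.Icc s₁ s₂)) (hhm : Set.MapsTo h (Set.Icc s₁ s₂) (Set.Icc s₁ s₂)) :
    d1 s₁ s₂ f h ≤ d1 s₁ s₂ f g + d1 s₁ s₂ g h := by
  have hfg := intAbs hs hf hfm hg hgm
  have hgh := intAbs hs hg hgm hh hhm
  have hfh := intAbs hs hf hfm hh hhm
  unfold d1
  rw [← intervalIntegral.integral_add hfg hgh]
  apply intervalIntegral.integral_mono_on hs hfh (hfg.add hgh)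
  intro x _
  exact abs_sub_le _ _ _

lemma d1_comp_left (hs : s₁ ≤ s₂) {L : ℝ} {g S S' : ℝ → ℝ}
    (hg : MonotoneOn g (Set.Icc s₁ s₂)) (hgm : Set.MapsTo g (Set.Icc s₁ s₂) (Set.Icc s₁ s₂))
    (hgl : ∀ x ∈ Set.Icc s₁ s₂, ∀ y ∈ Set.Icc s₁ s₂, |g x - g y| ≤ L * |x - y|)
    (hS : MonotoneOn S (Set.Icc s₁ s₂)) (hSm : Set.MapsTo S (Set.Icc s₁ s₂) (Set.Icc s₁ s₂))
    (hS' : MonotoneOn S' (Set.Icc s₁ s₂)) (hS'm : Set.MapsTo S' (Set.Icc s₁ s₂) (Set.Icc s₁ s₂)) :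
    d1 s₁ s₂ (fun x => g (S x)) (fun x => g (S' x)) ≤ L * d1 s₁ s₂ S S' := by
  unfold d1
  rw [← intervalIntegral.integral_const_mul]
  have hgS : MonotoneOn (fun x => g (S x)) (Set.Icc s₁ s₂) :=
    fun x hx y hy hxy => hg (hSm hx) (hSm hy) (hS hx hy hxy)
  have hgS' : MonotoneOn (fun x => g (S' x)) (Set.Icc s₁ s₂) :=
    fun x hx y hy hxy => hg (hS'm hx) (hS'm hy) (hS' hx hy hxy)
  apply intervalIntegral.integral_mono_on hs
    (intAbs hs hgS (fun x hx => hgm (hSm hx)) hgS' (fun x hx => hgm (hS'm hx)))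
    ((intAbs hs hS hSm hS' hS'm).const_mul L)
  intro x hx
  exact hgl (S x) (hSm hx) (S' x) (hS'm hx)

/-- Change of variables inequality: composing with a `K`-bi-Lipschitz nice transport
inflates integrals of nonnegative functions by at most `K`. -/
lemma clamp_lip (s₁ s₂ x y : ℝ) : |clamp s₁ s₂ x - clamp s₁ s₂ y| ≤ |x - y| := by
  have h1 := le_abs_self (x - y)
  have h2 := neg_abs_le (x - y)
  rw [abs_sub_le_iff]
  simp only [clamp, min_def, max_def]
  split_ifs <;> constructor <;> linarith

lemma cov (hs : s₁ < s₂) (hK : 1 ≤ K) {S : ℝ → ℝ} (hS : Nice s₁ s₂ K S) (f : ℝ → ℝ)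
    (hf : Measurable f) (hf0 : ∀ y, 0 ≤ f y) {B : ℝ} (hfB : ∀ y, f y ≤ B) :
    ∫ x in s₁..s₂, f (S x) ≤ K * ∫ x in s₁..s₂, f x := by
  have hK0 : (0:ℝ) < K := lt_of_lt_of_le one_pos hK
  set I := Set.Icc s₁ s₂ with hI
  set Sc := fun x => S (clamp s₁ s₂ x) with hSc
  have hScm : Monotone Sc := fun x y h =>
    hS.mono (clamp_mem hs.le x) (clamp_mem hs.le y) (clamp_monotone h)
  have hScmeas : Measurable Sc := hScm.measurable
  set g := fun y => geninv s₁ s₂ S (clamp s₁ s₂ y) with hg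
  have hgN := hS.geninv_nice hs.le hK0
  have hgl : LipschitzWith K.toNNReal g := by
    apply LipschitzWith.of_dist_le_mul
    intro x y
    rw [Real.dist_eq, Real.dist_eq, Real.coe_toNNReal _ hK0.le]
    calc |g x - g y| ≤ K * |clamp s₁ s₂ x - clamp s₁ s₂ y| :=
        (hgN.bil _ (clamp_mem hs.le x) _ (clamp_mem hs.le y)).2
      _ ≤ K * |x - y| := mul_le_mul_of_nonneg_left (clamp_lip s₁ s₂ x y) hK0.le
  have himg : ∀ A : Set ℝ, volume (g '' A) ≤ (K.toNNReal : ENNReal) * volume A := by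
    intro A
    have h1 := hgl.hausdorffMeasure_image_le (le_of_lt one_pos : (0:ℝ) ≤ 1) A
    rw [MeasureTheory.hausdorffMeasure_real, ENNReal.rpow_one] at h1
    exact h1
  have key : ∀ A : Set ℝ, volume (Sc ⁻¹' A ∩ I) ≤ (K.toNNReal : ENNReal) * volume (A ∩ I) := by
    intro A
    have hsub : Sc ⁻¹' A ∩ I ⊆ g '' (A ∩ I) := by
      rintro x ⟨hxA, hxI⟩
      have hxA' : S x ∈ A := by
        have h3 : Sc x ∈ A := hxA
        simp only [hSc, clamp_eq hxI] at h3
        exact h3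
      refine ⟨S x, ⟨hxA', hS.maps hxI⟩, ?_⟩
      simp only [hg, clamp_eq (hS.maps hxI)]
      exact hS.geninv_eq hxI
    exact le_trans (measure_mono hsub) (himg (A ∩ I))
  have hmap : Measure.map Sc (volume.restrict I) ≤ (K.toNNReal : ENNReal) • volume.restrict I := by
    rw [Measure.le_iff]
    intro A hA
    rw [Measure.map_apply hScmeas hA, Measure.restrict_apply (hScmeas hA),
      Measure.smul_apply, Measure.restrict_apply hA, smul_eq_mul]
    exact key A
  set φ := fun y => ENNReal.ofReal (f y) with hφ
  have hφm : Measurable φ := hf.ennreal_ofReal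
  have L1 : ∫⁻ x, φ (Sc x) ∂(volume.restrict I) ≤
      (K.toNNReal : ENNReal) * ∫⁻ x, φ x ∂(volume.restrict I) := by
    calc ∫⁻ x, φ (Sc x) ∂(volume.restrict I)
        = ∫⁻ y, φ y ∂(Measure.map Sc (volume.restrict I)) := (lintegral_map hφm hScmeas).symm
      _ ≤ ∫⁻ y, φ y ∂((K.toNNReal : ENNReal) • volume.restrict I) := lintegral_mono' hmap (le_refl _)
      _ = (K.toNNReal : ENNReal) * ∫⁻ x, φ x ∂(volume.restrict I) := lintegral_smul_measure _ _
  have hfin : ∫⁻ x, φ x ∂(volume.restrict I) ≠ ⊤ := by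
    have hle : ∫⁻ x, φ x ∂(volume.restrict I) ≤ ENNReal.ofReal B * volume I := by
      calc ∫⁻ x, φ x ∂(volume.restrict I)
          ≤ ∫⁻ _, ENNReal.ofReal B ∂(volume.restrict I) :=
            lintegral_mono fun x => ENNReal.ofReal_le_ofReal (hfB x)
        _ = ENNReal.ofReal B * volume I := by
            rw [MeasureTheory.lintegral_const, Measure.restrict_apply_univ]
    refine ne_top_of_le_ne_top ?_ hle
    rw [hI, Real.volume_Icc]
    exact ENNReal.mul_ne_top ENNReal.ofReal_ne_top ENNReal.ofReal_ne_top
  have conv : ∀ r : ℝ → ℝ, Measurable r → (∀ x, 0 ≤ r x) →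
      ∫ x in s₁..s₂, r x = (∫⁻ x, ENNReal.ofReal (r x) ∂(volume.restrict I)).toReal := by
    intro r hr hr0
    rw [intervalIntegral.integral_of_le hs.le,
      show volume.restrict I = volume.restrict (Set.Ioc s₁ s₂) from
        (Measure.restrict_congr_set MeasureTheory.Ioc_ae_eq_Icc).symm]
    exact integral_eq_lintegral_of_nonneg_ae (Filter.Eventually.of_forall hr0)
      hr.aestronglyMeasurable
  have e1 : ∫ x in s₁..s₂, f (S x) = (∫⁻ x, φ (Sc x) ∂(volume.restrict I)).toReal := by
    have e0 : ∫ x in s₁..s₂, f (S x) = ∫ x in s₁..s₂, f (Sc x) := by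
      apply intervalIntegral.integral_congr
      intro x hx
      rw [Set.uIcc_of_le hs.le] at hx
      simp only [hSc, clamp_eq hx]
    rw [e0]
    exact conv (fun x => f (Sc x)) (hf.comp hScmeas) (fun x => hf0 _)
  have e2 : ∫ x in s₁..s₂, f x = (∫⁻ x, φ x ∂(volume.restrict I)).toReal := conv f hf hf0
  rw [e1, e2]
  have hfin2 : (K.toNNReal : ENNReal) * ∫⁻ x, φ x ∂(volume.restrict I) ≠ ⊤ :=
    ENNReal.mul_ne_top ENNReal.coe_ne_top hfin
  calc (∫⁻ x, φ (Sc x) ∂(volume.restrict I)).toReal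
      ≤ ((K.toNNReal : ENNReal) * ∫⁻ x, φ x ∂(volume.restrict I)).toReal :=
        ENNReal.toReal_mono hfin2 L1
    _ = K * (∫⁻ x, φ x ∂(volume.restrict I)).toReal := by
        rw [ENNReal.toReal_mul, ENNReal.coe_toReal, Real.coe_toNNReal _ hK0.le]


lemma d1_comp_right (hs : s₁ < s₂) (hK : 1 ≤ K) {g g' S : ℝ → ℝ}
    (hg : MonotoneOn g (Set.Icc s₁ s₂)) (hgm : Set.MapsTo g (Set.Icc s₁ s₂) (Set.Icc s₁ s₂))
    (hg' : MonotoneOn g' (Set.Icc s₁ s₂)) (hg'm : Set.MapsTo g' (Set.Icc s₁ s₂) (Set.Icc s₁ s₂))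
    (hS : Nice s₁ s₂ K S) :
    d1 s₁ s₂ (fun x => g (S x)) (fun x => g' (S x)) ≤ K * d1 s₁ s₂ g g' := by
  set f := fun y => |g (clamp s₁ s₂ y) - g' (clamp s₁ s₂ y)| with hf
  have hGm : Monotone fun y => g (clamp s₁ s₂ y) :=
    fun x y h => hg (clamp_mem hs.le x) (clamp_mem hs.le y) (clamp_monotone h)
  have hG'm : Monotone fun y => g' (clamp s₁ s₂ y) :=
    fun x y h => hg' (clamp_mem hs.le x) (clamp_mem hs.le y) (clamp_monotone h)
  have hfmeas : Measurable f := (hGm.measurable.sub hG'm.measurable).abs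
  have hf0 : ∀ y, 0 ≤ f y := fun y => abs_nonneg _
  have hfB : ∀ y, f y ≤ s₂ - s₁ := by
    intro y
    have h1 := hgm (clamp_mem hs.le y)
    have h2 := hg'm (clamp_mem hs.le y)
    rw [hf, abs_le]
    constructor <;> [linarith [h1.1, h2.2]; linarith [h1.2, h2.1]]
  have h1 : d1 s₁ s₂ (fun x => g (S x)) (fun x => g' (S x)) = ∫ x in s₁..s₂, f (S x) := by
    apply intervalIntegral.integral_congr
    intro x hx
    rw [Set.uIcc_of_le hs.le] at hx
    simp only [hf, clamp_eq (hS.maps hx)]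
  have h2 : (∫ x in s₁..s₂, f x) = d1 s₁ s₂ g g' := by
    apply intervalIntegral.integral_congr
    intro x hx
    rw [Set.uIcc_of_le hs.le] at hx
    simp only [hf, clamp_eq hx]
  rw [d1] at h1 ⊢
  rw [h1, ← h2]
  exact cov hs hK hS f hfmeas hf0 hfB

lemma d1_geninv (hs : s₁ < s₂) (hK : 1 ≤ K) {T T' : ℝ → ℝ}
    (hT : Nice s₁ s₂ K T) (hT' : Nice s₁ s₂ K T') :
    d1 s₁ s₂ (geninv s₁ s₂ T) (geninv s₁ s₂ T') ≤ K ^ 2 * d1 s₁ s₂ T T' := by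
  have hK0 : (0:ℝ) < K := lt_of_lt_of_le one_pos hK
  have hgT := hT.geninv_nice hs.le hK0
  have hgT' := hT'.geninv_nice hs.le hK0
  set f := fun y => |T (clamp s₁ s₂ y) - T' (clamp s₁ s₂ y)| with hf
  have hTm : Monotone fun y => T (clamp s₁ s₂ y) :=
    fun x y h => hT.mono (clamp_mem hs.le x) (clamp_mem hs.le y) (clamp_monotone h)
  have hT'm : Monotone fun y => T' (clamp s₁ s₂ y) :=
    fun x y h => hT'.mono (clamp_mem hs.le x) (clamp_mem hs.le y) (clamp_monotone h)
  have hfmeas : Measurable f := (hTm.measurable.sub hT'm.measurable).abs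
  have hfB : ∀ y, f y ≤ s₂ - s₁ := by
    intro y
    have h1 := hT.maps (clamp_mem hs.le y)
    have h2 := hT'.maps (clamp_mem hs.le y)
    rw [hf, abs_le]
    constructor <;> [linarith [h1.1, h2.2]; linarith [h1.2, h2.1]]
  set gc := fun y => geninv s₁ s₂ T' (clamp s₁ s₂ y) with hgc
  have hgcm : Monotone gc :=
    fun x y h => hgT'.mono (clamp_mem hs.le x) (clamp_mem hs.le y) (clamp_monotone h)
  -- pointwise bound on Icc
  have hpt : ∀ x ∈ Set.Icc s₁ s₂,
      |geninv s₁ s₂ T x - geninv s₁ s₂ T' x| ≤ K * f (gc x) := by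
    intro x hx
    obtain ⟨hu, hTu⟩ := hT.geninv_spec hs.le hK0 hx
    obtain ⟨hv, hTv⟩ := hT'.geninv_spec hs.le hK0 hx
    have hgcx : gc x = geninv s₁ s₂ T' x := by simp only [hgc, clamp_eq hx]
    have hfv : f (gc x) = |T (geninv s₁ s₂ T' x) - T' (geninv s₁ s₂ T' x)| := by
      rw [hgcx]
      simp only [hf, clamp_eq hv]
    rw [hfv, hTv]
    have hb := (hT.bil _ hu _ hv).1
    rw [hTu] at hb
    rw [abs_sub_comm (T (geninv s₁ s₂ T' x)) x]
    nlinarith [abs_nonneg (x - T (geninv s₁ s₂ T' x)), mul_inv_cancel₀ hK0.ne',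
      abs_nonneg (geninv s₁ s₂ T x - geninv s₁ s₂ T' x)]
  have hint1 : IntervalIntegrable (fun x => |geninv s₁ s₂ T x - geninv s₁ s₂ T' x|)
      volume s₁ s₂ := intAbs hs.le hgT.mono hgT.maps hgT'.mono hgT'.maps
  have hint2 : IntervalIntegrable (fun x => K * f (gc x)) volume s₁ s₂ := by
    apply IntervalIntegrable.const_mul
    apply intInt_of_meas_bdd (B := s₂ - s₁) (hfmeas.comp hgcm.measurable)
    intro x
    simp only [Function.comp_apply, hf, abs_abs]
    exact hfB (gc x)
  have step1 : d1 s₁ s₂ (geninv s₁ s₂ T) (geninv s₁ s₂ T') ≤ ∫ x in s₁..s₂, K * f (gc x) := by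
    unfold d1
    exact intervalIntegral.integral_mono_on hs.le hint1 hint2 hpt
  have step2 : (∫ x in s₁..s₂, f (gc x)) = ∫ x in s₁..s₂, f (geninv s₁ s₂ T' x) := by
    apply intervalIntegral.integral_congr
    intro x hx
    rw [Set.uIcc_of_le hs.le] at hx
    simp only [hgc, clamp_eq hx]
  have step3 : (∫ x in s₁..s₂, f (geninv s₁ s₂ T' x)) ≤ K * ∫ x in s₁..s₂, f x :=
    cov hs hK hgT' f hfmeas (fun y => abs_nonneg _) hfB
  have step4 : (∫ x in s₁..s₂, f x) = d1 s₁ s₂ T T' := by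
    apply intervalIntegral.integral_congr
    intro x hx
    rw [Set.uIcc_of_le hs.le] at hx
    simp only [hf, clamp_eq hx]
  calc d1 s₁ s₂ (geninv s₁ s₂ T) (geninv s₁ s₂ T')
      ≤ ∫ x in s₁..s₂, K * f (gc x) := step1
    _ = K * ∫ x in s₁..s₂, f (gc x) := intervalIntegral.integral_const_mul _ _
    _ = K * ∫ x in s₁..s₂, f (geninv s₁ s₂ T' x) := by rw [step2]
    _ ≤ K * (K * ∫ x in s₁..s₂, f x) := by
        apply mul_le_mul_of_nonneg_left step3 hK0.le
    _ = K ^ 2 * d1 s₁ s₂ T T' := by rw [step4]; ring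

lemma d1_oneSmul (hs : s₁ ≤ s₂) {a : ℝ} (ha0 : 0 ≤ a) {U U' : ℝ → ℝ} :
    d1 s₁ s₂ (oneSmul s₁ s₂ a U) (oneSmul s₁ s₂ a U') ≤ a * d1 s₁ s₂ U U' := by
  rcases eq_or_lt_of_le ha0 with heq | ha
  · have e : ∀ V : ℝ → ℝ, oneSmul s₁ s₂ a V = fun x => x := by
      intro V; funext x; simp [oneSmul, ← heq]
    rw [e U, e U', ← heq]
    simp [d1]
  · have e : (fun x => |oneSmul s₁ s₂ a U x - oneSmul s₁ s₂ a U' x|) =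
        fun x => a * |U x - U' x| := by
      funext x
      simp only [oneSmul, if_pos ha]
      rw [show x + a * (U x - x) - (x + a * (U' x - x)) = a * (U x - U' x) by ring,
        abs_mul, abs_of_pos ha]
    unfold d1
    rw [e, intervalIntegral.integral_const_mul]

lemma d1_iter (hs : s₁ < s₂) (hK : 1 ≤ K) {U U' : ℝ → ℝ}
    (hU : Nice s₁ s₂ K U) (hU' : Nice s₁ s₂ K U') :
    ∀ m : ℕ, d1 s₁ s₂ (U^[m]) (U'^[m]) ≤ (m : ℝ) * K ^ m * d1 s₁ s₂ U U'
  | 0 => by simp [d1]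
  | m + 1 => by
    have hK0 : (0:ℝ) < K := lt_of_lt_of_le one_pos hK
    have ih := d1_iter hs hK hU hU' m
    have hUm := hU.iter hK m
    have hU'm := hU'.iter hK m
    have e1 : (U^[m+1] : ℝ → ℝ) = fun x => U (U^[m] x) := by
      funext x; exact Function.iterate_succ_apply' U m x
    have e2 : (U'^[m+1] : ℝ → ℝ) = fun x => U' (U'^[m] x) := by
      funext x; exact Function.iterate_succ_apply' U' m x
    rw [e1, e2]
    have hmid : MonotoneOn (fun x => U (U'^[m] x)) (Set.Icc s₁ s₂) :=
      fun x hx y hy h => hU.mono (hU'm.maps hx) (hU'm.maps hy) (hU'm.mono hx hy h)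
    have hmidm : Set.MapsTo (fun x => U (U'^[m] x)) (Set.Icc s₁ s₂) (Set.Icc s₁ s₂) :=
      fun x hx => hU.maps (hU'm.maps hx)
    have tri := d1_triangle hs.le
      (f := fun x => U (U^[m] x)) (g := fun x => U (U'^[m] x)) (h := fun x => U' (U'^[m] x))
      (fun x hx y hy h => hU.mono (hUm.maps hx) (hUm.maps hy) (hUm.mono hx hy h))
      (fun x hx => hU.maps (hUm.maps hx)) hmid hmidm
      (fun x hx y hy h => hU'.mono (hU'm.maps hx) (hU'm.maps hy) (hU'm.mono hx hy h))
      (fun x hx => hU'.maps (hU'm.maps hx))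
    have t1 : d1 s₁ s₂ (fun x => U (U^[m] x)) (fun x => U (U'^[m] x)) ≤
        K * d1 s₁ s₂ (U^[m]) (U'^[m]) :=
      d1_comp_left hs.le hU.mono hU.maps (fun x hx y hy => (hU.bil x hx y hy).2)
        hUm.mono hUm.maps hU'm.mono hU'm.maps
    have t2 : d1 s₁ s₂ (fun x => U (U'^[m] x)) (fun x => U' (U'^[m] x)) ≤
        K ^ m * d1 s₁ s₂ U U' :=
      d1_comp_right hs (one_le_pow₀ hK) hU.mono hU.maps hU'.mono hU'.maps hU'm
    have hd := d1_nonneg hs.le U U'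
    have hdm := d1_nonneg hs.le (U^[m]) (U'^[m])
    have hpow : K ^ m ≤ K ^ (m + 1) := pow_le_pow_right₀ hK (Nat.le_succ m)
    have hKm : (0:ℝ) < K ^ m := pow_pos hK0 m
    calc d1 s₁ s₂ (fun x => U (U^[m] x)) (fun x => U' (U'^[m] x))
        ≤ d1 s₁ s₂ (fun x => U (U^[m] x)) (fun x => U (U'^[m] x)) +
          d1 s₁ s₂ (fun x => U (U'^[m] x)) (fun x => U' (U'^[m] x)) := tri
      _ ≤ K * ((m : ℝ) * K ^ m * d1 s₁ s₂ U U') + K ^ m * d1 s₁ s₂ U U' := by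
          have := mul_le_mul_of_nonneg_left (le_trans ih (le_refl _)) hK0.le
          nlinarith [mul_le_mul_of_nonneg_left ih hK0.le]
      _ ≤ ((m : ℝ) + 1) * K ^ (m + 1) * d1 s₁ s₂ U U' := by
          have h1 : K * ((m : ℝ) * K ^ m * d1 s₁ s₂ U U') =
            (m : ℝ) * K ^ (m+1) * d1 s₁ s₂ U U' := by ring
          nlinarith [mul_le_mul_of_nonneg_right hpow hd]
      _ = (↑(m + 1) : ℝ) * K ^ (m + 1) * d1 s₁ s₂ U U' := by push_cast; ring

lemma oneSmul_neg {α : ℝ} (hα : α < 0) (T : ℝ → ℝ) :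
    oneSmul s₁ s₂ α T = oneSmul s₁ s₂ (-α) (geninv s₁ s₂ T) := by
  funext x
  simp only [oneSmul]
  rw [if_neg (not_lt.2 hα.le), if_neg hα.ne, if_pos (neg_pos.2 hα)]
  ring

lemma odot_canon (α : ℝ) (T : ℝ → ℝ) :
    odot s₁ s₂ α T = fun x => oneSmul s₁ s₂ (if |α| ≤ 1 then |α| else Int.fract |α|)
      (if 0 ≤ α then T else geninv s₁ s₂ T)
      ((if 0 ≤ α then T else geninv s₁ s₂ T)^[if |α| ≤ 1 then 0 else (⌊|α|⌋).toNat] x) := by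
  unfold odot
  by_cases h1 : |α| ≤ 1
  · rw [if_pos h1]
    simp only [if_pos h1, Function.iterate_zero, id_eq]
    rcases lt_trichotomy α 0 with hneg | h0 | hpos
    · rw [if_neg (not_le.2 hneg), oneSmul_neg hneg T, abs_of_neg hneg]
    · subst h0
      rw [if_pos le_rfl, abs_zero]
    · rw [if_pos hpos.le, abs_of_pos hpos]
  · rw [if_neg h1]
    simp only [if_neg h1]
    by_cases h0 : 0 < α
    · rw [if_pos h0, if_pos h0.le, abs_of_pos h0]
      rfl
    · have hne : α ≠ 0 := by
        intro h; rw [h] at h1; simp at h1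
      have hneg : α < 0 := lt_of_le_of_ne (not_lt.1 h0) hne
      rw [if_neg h0, if_neg (not_le.2 hneg)]
      rfl

lemma nice_odot (hs : s₁ ≤ s₂) (hK : 1 ≤ K) {n : ℕ} {α : ℝ} (hα : |α| ≤ n)
    (hT : Nice s₁ s₂ K T) : Nice s₁ s₂ (K ^ (n + 1)) (odot s₁ s₂ α T) := by
  have hK0 : (0:ℝ) < K := lt_of_lt_of_le one_pos hK
  rw [odot_canon]
  set U := if 0 ≤ α then T else geninv s₁ s₂ T with hUdef
  set a := if |α| ≤ 1 then |α| else Int.fract |α| with hadef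
  set b := if |α| ≤ 1 then 0 else (⌊|α|⌋).toNat with hbdef
  have hU : Nice s₁ s₂ K U := by
    rw [hUdef]; split
    · exact hT
    · exact hT.geninv_nice hs hK0
  have ha0 : 0 ≤ a := by
    rw [hadef]; split
    · exact abs_nonneg α
    · exact Int.fract_nonneg _
  have ha1 : a ≤ 1 := by
    rw [hadef]; split
    · assumption
    · exact (Int.fract_lt_one _).le
  have hb : b ≤ n := by
    rw [hbdef]; split
    · exact Nat.zero_le n
    · rw [Int.toNat_le]
      exact le_trans (Int.floor_le_floor hα) (by simp)
  have hcomp := (hU.iter hK b).comp (pow_pos hK0 b) hK0 (nice_oneSmul hs hK ha0 ha1 hU)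
  rw [← pow_succ] at hcomp
  exact hcomp.weaken (pow_pos hK0 (b+1)) (pow_le_pow_right₀ hK (Nat.succ_le_succ hb))

lemma d1_odot (hs : s₁ < s₂) (hK : 1 ≤ K) {n : ℕ} {α : ℝ} (hα : |α| ≤ n)
    {T T' : ℝ → ℝ} (hT : Nice s₁ s₂ K T) (hT' : Nice s₁ s₂ K T') :
    d1 s₁ s₂ (odot s₁ s₂ α T) (odot s₁ s₂ α T') ≤
      ((n : ℝ) + 1) * K ^ (n + 3) * d1 s₁ s₂ T T' := by
  have hK0 : (0:ℝ) < K := lt_of_lt_of_le one_pos hK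
  rw [odot_canon, odot_canon]
  set U := if 0 ≤ α then T else geninv s₁ s₂ T with hUdef
  set U' := if 0 ≤ α then T' else geninv s₁ s₂ T' with hU'def
  set a := if |α| ≤ 1 then |α| else Int.fract |α| with hadef
  set b := if |α| ≤ 1 then 0 else (⌊|α|⌋).toNat with hbdef
  have hU : Nice s₁ s₂ K U := by
    rw [hUdef]; split
    · exact hT
    · exact hT.geninv_nice hs.le hK0
  have hU' : Nice s₁ s₂ K U' := by
    rw [hU'def]; split
    · exact hT'
    · exact hT'.geninv_nice hs.le hK0
  have ha0 : 0 ≤ a := by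
    rw [hadef]; split
    · exact abs_nonneg α
    · exact Int.fract_nonneg _
  have ha1 : a ≤ 1 := by
    rw [hadef]; split
    · assumption
    · exact (Int.fract_lt_one _).le
  have hb : b ≤ n := by
    rw [hbdef]; split
    · exact Nat.zero_le n
    · rw [Int.toNat_le]
      exact le_trans (Int.floor_le_floor hα) (by simp)
  have hdTT : 0 ≤ d1 s₁ s₂ T T' := d1_nonneg hs.le T T'
  have hdU : d1 s₁ s₂ U U' ≤ K ^ 2 * d1 s₁ s₂ T T' := by
    rw [hUdef, hU'def]
    split
    · nlinarith [one_le_pow₀ hK (n := 2)]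
    · exact d1_geninv hs hK hT hT'
  have hdUU : 0 ≤ d1 s₁ s₂ U U' := d1_nonneg hs.le U U'
  have hUb := hU.iter hK b
  have hU'b := hU'.iter hK b
  have hg := nice_oneSmul hs.le hK ha0 ha1 hU
  have hg' := nice_oneSmul hs.le hK ha0 ha1 hU'
  -- triangle through oneSmul a U ∘ U'^[b]
  have tri := d1_triangle hs.le
    (f := fun x => oneSmul s₁ s₂ a U (U^[b] x))
    (g := fun x => oneSmul s₁ s₂ a U (U'^[b] x))
    (h := fun x => oneSmul s₁ s₂ a U' (U'^[b] x))
    (fun x hx y hy h => hg.mono (hUb.maps hx) (hUb.maps hy) (hUb.mono hx hy h))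
    (fun x hx => hg.maps (hUb.maps hx))
    (fun x hx y hy h => hg.mono (hU'b.maps hx) (hU'b.maps hy) (hU'b.mono hx hy h))
    (fun x hx => hg.maps (hU'b.maps hx))
    (fun x hx y hy h => hg'.mono (hU'b.maps hx) (hU'b.maps hy) (hU'b.mono hx hy h))
    (fun x hx => hg'.maps (hU'b.maps hx))
  have t1 : d1 s₁ s₂ (fun x => oneSmul s₁ s₂ a U (U^[b] x))
      (fun x => oneSmul s₁ s₂ a U (U'^[b] x)) ≤ K * d1 s₁ s₂ (U^[b]) (U'^[b]) :=
    d1_comp_left hs.le hg.mono hg.maps (fun x hx y hy => (hg.bil x hx y hy).2)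
      hUb.mono hUb.maps hU'b.mono hU'b.maps
  have t2 : d1 s₁ s₂ (fun x => oneSmul s₁ s₂ a U (U'^[b] x))
      (fun x => oneSmul s₁ s₂ a U' (U'^[b] x)) ≤
      K ^ b * d1 s₁ s₂ (oneSmul s₁ s₂ a U) (oneSmul s₁ s₂ a U') :=
    d1_comp_right hs (one_le_pow₀ hK) hg.mono hg.maps hg'.mono hg'.maps hU'b
  have titer := d1_iter hs hK hU hU' b
  have tsmul := d1_oneSmul hs.le ha0 (U := U) (U' := U')
  -- assemble
  have hbn : (b : ℝ) ≤ (n : ℝ) := Nat.cast_le.2 hb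
  have hKb : K ^ b ≤ K ^ n := pow_le_pow_right₀ hK hb
  have hKb1 : K ^ (b+1) ≤ K ^ (n+1) := pow_le_pow_right₀ hK (Nat.succ_le_succ hb)
  have hKn : (0:ℝ) < K ^ n := pow_pos hK0 n
  have hKb0 : (0:ℝ) < K ^ b := pow_pos hK0 b
  have key : d1 s₁ s₂ (fun x => oneSmul s₁ s₂ a U (U^[b] x))
      (fun x => oneSmul s₁ s₂ a U' (U'^[b] x)) ≤
      ((n : ℝ) + 1) * K ^ (n + 1) * d1 s₁ s₂ U U' := by
    have c1 : K * d1 s₁ s₂ (U^[b]) (U'^[b]) ≤ (b : ℝ) * K ^ (b + 1) * d1 s₁ s₂ U U' := by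
      have := mul_le_mul_of_nonneg_left titer hK0.le
      calc K * d1 s₁ s₂ (U^[b]) (U'^[b]) ≤ K * ((b : ℝ) * K ^ b * d1 s₁ s₂ U U') := this
        _ = (b : ℝ) * K ^ (b + 1) * d1 s₁ s₂ U U' := by ring
    have c2 : K ^ b * d1 s₁ s₂ (oneSmul s₁ s₂ a U) (oneSmul s₁ s₂ a U') ≤
        K ^ b * d1 s₁ s₂ U U' := by
      apply mul_le_mul_of_nonneg_left _ hKb0.le
      calc d1 s₁ s₂ (oneSmul s₁ s₂ a U) (oneSmul s₁ s₂ a U') ≤ a * d1 s₁ s₂ U U' := tsmul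
        _ ≤ 1 * d1 s₁ s₂ U U' := mul_le_mul_of_nonneg_right ha1 hdUU
        _ = d1 s₁ s₂ U U' := one_mul _
    refine le_trans tri ?_
    refine le_trans (add_le_add (le_trans t1 c1) (le_trans t2 c2)) ?_
    have e1 : (b : ℝ) * K ^ (b+1) ≤ (n : ℝ) * K ^ (n+1) := by
      apply mul_le_mul hbn hKb1 (pow_pos hK0 (b+1)).le (Nat.cast_nonneg n)
    have e2 : K ^ b ≤ K ^ (n+1) := hKb.trans (pow_le_pow_right₀ hK (Nat.le_succ n))
    nlinarith [mul_le_mul_of_nonneg_right e1 hdUU, mul_le_mul_of_nonneg_right e2 hdUU]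
  refine le_trans key ?_
  calc ((n : ℝ) + 1) * K ^ (n + 1) * d1 s₁ s₂ U U' ≤
      ((n : ℝ) + 1) * K ^ (n + 1) * (K ^ 2 * d1 s₁ s₂ T T') := by
        apply mul_le_mul_of_nonneg_left hdU
        positivity
    _ = ((n : ℝ) + 1) * K ^ (n + 3) * d1 s₁ s₂ T T' := by ring

end AuxProof

/-- Lipschitz stability of two-fold transport combinations for bi-Lipschitz transports
(key estimate in the proof of Theorem 4): there is a constant C = C(K, c, s₁, s₂) such that
d₁(α₂ ⊙ T₂ ⊕ α₁ ⊙ T₁, α₂ ⊙ T₂′ ⊕ α₁ ⊙ T₁′) ≤ C (d₁(T₁, T₁′) + d₁(T₂, T₂′)) for all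
α₁, α₂ ∈ [-c, c] and all strictly increasing, differentiable, K-bi-Lipschitz transports. -/
theorem twofold_chain_lipschitz_stability (s₁ s₂ : ℝ) (hs : s₁ < s₂)
    (K c : ℝ) (hK : 1 ≤ K) (hc : 0 < c) :
    ∃ C : ℝ, ∀ α₁ ∈ Set.Icc (-c) c, ∀ α₂ ∈ Set.Icc (-c) c,
      ∀ T₁ T₂ T₁' T₂' : ℝ → ℝ,
        IsTransport s₁ s₂ T₁ → StrictMonoOn T₁ (Set.Icc s₁ s₂) →
        DifferentiableOn ℝ T₁ (Set.Icc s₁ s₂) → BiLipschitzOn s₁ s₂ K T₁ →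
        IsTransport s₁ s₂ T₂ → StrictMonoOn T₂ (Set.Icc s₁ s₂) →
        DifferentiableOn ℝ T₂ (Set.Icc s₁ s₂) → BiLipschitzOn s₁ s₂ K T₂ →
        IsTransport s₁ s₂ T₁' → StrictMonoOn T₁' (Set.Icc s₁ s₂) →
        DifferentiableOn ℝ T₁' (Set.Icc s₁ s₂) → BiLipschitzOn s₁ s₂ K T₁' →
        IsTransport s₁ s₂ T₂' → StrictMonoOn T₂' (Set.Icc s₁ s₂) →
        DifferentiableOn ℝ T₂' (Set.Icc s₁ s₂) → BiLipschitzOn s₁ s₂ K T₂' →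
        d1 s₁ s₂ (oplus (odot s₁ s₂ α₂ T₂) (odot s₁ s₂ α₁ T₁))
            (oplus (odot s₁ s₂ α₂ T₂') (odot s₁ s₂ α₁ T₁')) ≤
          C * (d1 s₁ s₂ T₁ T₁' + d1 s₁ s₂ T₂ T₂') := by
  have hs' : s₁ ≤ s₂ := hs.le
  have hK0 : (0:ℝ) < K := lt_of_lt_of_le one_pos hK
  set n := ⌈c⌉₊ with hn
  have hcn : c ≤ (n : ℝ) := Nat.le_ceil c
  refine ⟨K ^ (n + 1) * (((n : ℝ) + 1) * K ^ (n + 3)), ?_⟩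
  intro α₁ hα₁ α₂ hα₂ T₁ T₂ T₁' T₂' ht1 hm1 _ hb1 ht2 hm2 _ hb2 ht1' hm1' _ hb1' ht2' hm2' _ hb2'
  have hT₁ : Nice s₁ s₂ K T₁ := ⟨hm1, ht1.2.1, ht1.2.2.1, ht1.2.2.2, hb1⟩
  have hT₂ : Nice s₁ s₂ K T₂ := ⟨hm2, ht2.2.1, ht2.2.2.1, ht2.2.2.2, hb2⟩
  have hT₁' : Nice s₁ s₂ K T₁' := ⟨hm1', ht1'.2.1, ht1'.2.2.1, ht1'.2.2.2, hb1'⟩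
  have hT₂' : Nice s₁ s₂ K T₂' := ⟨hm2', ht2'.2.1, ht2'.2.2.1, ht2'.2.2.2, hb2'⟩
  have hα₁n : |α₁| ≤ (n : ℝ) := le_trans (abs_le.2 ⟨hα₁.1, hα₁.2⟩) hcn
  have hα₂n : |α₂| ≤ (n : ℝ) := le_trans (abs_le.2 ⟨hα₂.1, hα₂.2⟩) hcn
  set g := odot s₁ s₂ α₁ T₁ with hgdef
  set g' := odot s₁ s₂ α₁ T₁' with hg'def
  set S := odot s₁ s₂ α₂ T₂ with hSdef
  set S' := odot s₁ s₂ α₂ T₂' with hS'def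
  have hg : Nice s₁ s₂ (K ^ (n + 1)) g := nice_odot hs' hK hα₁n hT₁
  have hg' : Nice s₁ s₂ (K ^ (n + 1)) g' := nice_odot hs' hK hα₁n hT₁'
  have hS : Nice s₁ s₂ (K ^ (n + 1)) S := nice_odot hs' hK hα₂n hT₂
  have hS' : Nice s₁ s₂ (K ^ (n + 1)) S' := nice_odot hs' hK hα₂n hT₂'
  have hKn1 : (1:ℝ) ≤ K ^ (n + 1) := one_le_pow₀ hK
  have hKn0 : (0:ℝ) < K ^ (n + 1) := pow_pos hK0 _
  have e : oplus S g = fun x => g (S x) := rfl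
  have e' : oplus S' g' = fun x => g' (S' x) := rfl
  rw [e, e']
  have tri := d1_triangle hs'
    (f := fun x => g (S x)) (g := fun x => g (S' x)) (h := fun x => g' (S' x))
    (fun x hx y hy h => hg.mono (hS.maps hx) (hS.maps hy) (hS.mono hx hy h))
    (fun x hx => hg.maps (hS.maps hx))
    (fun x hx y hy h => hg.mono (hS'.maps hx) (hS'.maps hy) (hS'.mono hx hy h))
    (fun x hx => hg.maps (hS'.maps hx))
    (fun x hx y hy h => hg'.mono (hS'.maps hx) (hS'.maps hy) (hS'.mono hx hy h))
    (fun x hx => hg'.maps (hS'.maps hx))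
  have t1 : d1 s₁ s₂ (fun x => g (S x)) (fun x => g (S' x)) ≤
      K ^ (n + 1) * d1 s₁ s₂ S S' :=
    d1_comp_left hs' hg.mono hg.maps (fun x hx y hy => (hg.bil x hx y hy).2)
      hS.mono hS.maps hS'.mono hS'.maps
  have t2 : d1 s₁ s₂ (fun x => g (S' x)) (fun x => g' (S' x)) ≤
      K ^ (n + 1) * d1 s₁ s₂ g g' :=
    d1_comp_right hs hKn1 hg.mono hg.maps hg'.mono hg'.maps hS'
  have o1 : d1 s₁ s₂ S S' ≤ ((n : ℝ) + 1) * K ^ (n + 3) * d1 s₁ s₂ T₂ T₂' :=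
    d1_odot hs hK hα₂n hT₂ hT₂'
  have o2 : d1 s₁ s₂ g g' ≤ ((n : ℝ) + 1) * K ^ (n + 3) * d1 s₁ s₂ T₁ T₁' :=
    d1_odot hs hK hα₁n hT₁ hT₁'
  have c1 := mul_le_mul_of_nonneg_left o1 hKn0.le
  have c2 := mul_le_mul_of_nonneg_left o2 hKn0.le
  have final := le_trans tri (add_le_add (le_trans t1 c1) (le_trans t2 c2))
  calc d1 s₁ s₂ (fun x => g (S x)) (fun x => g' (S' x))
      ≤ K ^ (n + 1) * (((n : ℝ) + 1) * K ^ (n + 3) * d1 s₁ s₂ T₂ T₂') +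
        K ^ (n + 1) * (((n : ℝ) + 1) * K ^ (n + 3) * d1 s₁ s₂ T₁ T₁') := final
    _ = K ^ (n + 1) * (((n : ℝ) + 1) * K ^ (n + 3)) *
        (d1 s₁ s₂ T₁ T₁' + d1 s₁ s₂ T₂ T₂') := by ring

end ATM
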